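/- There exists exactly one triple (K, L, L_0) of formal power series in ℚ[[t]] satisfying the system: K = t + t·L_0; L = 1 + 2t·L² + t·(L − 1) + 2t·(L_0 − K); L_0 = 2t·L·L_0 + t·L + t·L_0 + t·(L_0 − K). Moreover, the series L of this unique solution satisfies the quadratic equation 2t·L² − (1−t)²·L − t² − 2t + 1 = 0 in ℚ[[t]]. -/

import Mathlib

open PowerSeries

section Aux

open Finset

/-- Coefficients of `1 - 2X - X²`. -/
def cq : ℕ → ℚ := fun n => if n = 0 then 1 else if n = 1 then -2 else if n = 2 then -1 else 0

/-- Coefficients of the unique power series solution `L`. -/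
def aq : ℕ → ℚ
  | 0 => 1
  | (n+1) => cq (n+1) + 2 * (∑ p ∈ (Finset.HasAntidiagonal.antidiagonal n).attach, aq p.1.1 * aq p.1.2)
      + 2 * aq n - (if n = 0 then 0 else aq (n-1))
decreasing_by
  · have := Finset.HasAntidiagonal.mem_antidiagonal.mp p.2; omega
  · have := Finset.HasAntidiagonal.mem_antidiagonal.mp p.2; omega
  · omega
  · omega

lemma aq_rec (n : ℕ) : aq (n+1) = cq (n+1) + 2 * (∑ p ∈ Finset.HasAntidiagonal.antidiagonal n, aq p.1 * aq p.2)
      + 2 * aq n - (if n = 0 then 0 else aq (n-1)) := by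
  rw [aq, ← Finset.sum_attach (Finset.HasAntidiagonal.antidiagonal n) (fun p => aq p.1 * aq p.2)]

/-- The generating function `L` of `𝓛⁽¹⁾`. -/
noncomputable def Lq : PowerSeries ℚ := PowerSeries.mk aq

lemma coeff_two_mul' (f : ℚ⟦X⟧) (n : ℕ) : coeff n (2 * f) = 2 * coeff n f := by
  rw [two_mul, map_add, two_mul]

lemma coeff_succ_two_X_mul (f : ℚ⟦X⟧) (n : ℕ) :
    coeff (n+1) (2 * X * f) = 2 * coeff n f := by
  rw [show (2 : ℚ⟦X⟧) * X * f = X * (2 * f) by ring, coeff_succ_X_mul, coeff_two_mul']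

lemma coeff_succ_X_sq_mul (f : ℚ⟦X⟧) (n : ℕ) :
    coeff (n+1) (X^2 * f) = if n = 0 then 0 else coeff (n-1) f := by
  cases n with
  | zero => rw [mul_comm, coeff_mul_X_pow']; simp
  | succ m =>
    have : m + 1 + 1 = m + 2 := rfl
    rw [this, show X^2 * f = X * (X * f) by ring, coeff_succ_X_mul, coeff_succ_X_mul]
    simp

lemma Lq_rec : Lq = 1 - 2*X - X^2 + 2*X*Lq^2 + 2*X*Lq - X^2*Lq := by
  ext n
  cases n with
  | zero =>
    simp [Lq, coeff_zero_eq_constantCoeff, map_sub, map_add, aq]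
  | succ n =>
    rw [Lq, coeff_mk, aq_rec]
    simp only [map_add, map_sub]
    rw [coeff_succ_two_X_mul, coeff_succ_two_X_mul, coeff_succ_X_sq_mul,
      coeff_mk, coeff_one, coeff_two_mul', coeff_X, sq (PowerSeries.mk aq), coeff_mul]
    simp only [coeff_mk, coeff_X_pow]
    simp only [cq]
    rcases Nat.lt_or_ge n 2 with h | h
    · interval_cases n <;> norm_num
    · have h0 : ¬ (n = 0) := by omega
      have h1 : ¬ (n + 1 = 0) := by omega
      have h2 : ¬ (n + 1 = 1) := by omega
      have h3 : ¬ (n + 1 = 2) := by omega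
      simp [h0, h1, h2, h3]

/-- `L` satisfies equation (11). -/
lemma Lq_quad : 2 * X * Lq ^ 2 - (1 - X) ^ 2 * Lq - X ^ 2 - 2 * X + 1 = 0 := by
  linear_combination - Lq_rec

end Aux

/-- The system (for `k = 1`, after the 0/1 symmetry) of Proposition 3.1:
`K = t + t L₀`, `L = 1 + 2t L² + t(L−1) + 2t(L₀ − K)`,
`L₀ = 2t L L₀ + t L + t L₀ + t(L₀ − K)`. -/
def SysL1 (K L L0 : PowerSeries ℚ) : Prop :=
  K = X + X * L0 ∧
  L = 1 + 2 * X * L ^ 2 + X * (L - 1) + 2 * X * (L0 - K) ∧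
  L0 = 2 * X * L * L0 + X * L + X * L0 + X * (L0 - K)

lemma quad_of_sys (K L L0 : PowerSeries ℚ) (h : SysL1 K L L0) :
    2 * X * L ^ 2 - (1 - X) ^ 2 * L - X ^ 2 - 2 * X + 1 = 0 := by
  obtain ⟨h1, h2, h3⟩ := h
  have hU : (1 - X - 2*X*L : ℚ⟦X⟧) ≠ 0 := by
    intro hc
    have := congrArg (constantCoeff) hc
    simp at this
  have hfac : (2 * X * L ^ 2 - (1 - X) ^ 2 * L - X ^ 2 - 2 * X + 1) * (1 - X - 2*X*L) = 0 := by
    linear_combination (2*X*((1-X)^2 - 2*X*L) + 2*X^2*(1-X)) * h1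
      - ((1-X)^2 - 2*X*L) * h2 - (2*X*(1-X)) * h3
  rcases mul_eq_zero.mp hfac with h | h
  · exact h
  · exact absurd h hU

lemma L0D_of_sys (K L L0 : PowerSeries ℚ) (h : SysL1 K L L0) :
    L0 * ((1-X)^2 - 2*X*L) = X * (L - X) := by
  obtain ⟨h1, h2, h3⟩ := h
  linear_combination h3 - X * h1

lemma D_ne (L : ℚ⟦X⟧) : ((1-X)^2 - 2*X*L : ℚ⟦X⟧) ≠ 0 := by
  intro hc
  have := congrArg (constantCoeff) hc
  simp at this

/-- There is exactly one triple `(K, L, L₀)` of power series in `ℚ[[t]]`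
satisfying the system `SysL1`, and the series `L` of this solution satisfies
`2t L² − (1−t)² L − t² − 2t + 1 = 0` (equation (11) of the paper, the
algebraic equation for the generating function of `𝓛⁽¹⁾`). -/
theorem sysL1_unique_and_quadratic :
    (∃! v : PowerSeries ℚ × PowerSeries ℚ × PowerSeries ℚ, SysL1 v.1 v.2.1 v.2.2) ∧
    (∀ K L L0 : PowerSeries ℚ, SysL1 K L L0 →
      2 * X * L ^ 2 - (1 - X) ^ 2 * L - X ^ 2 - 2 * X + 1 = 0) := by
  constructor
  · -- existence and uniqueness
    set D : ℚ⟦X⟧ := (1-X)^2 - 2*X*Lq with hDdef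
    have hDc : constantCoeff D ≠ 0 := by
      simp [hDdef]
    have hu : D * D⁻¹ = 1 := PowerSeries.mul_inv_cancel _ hDc
    set L0 : ℚ⟦X⟧ := X * (Lq - X) * D⁻¹ with hL0def
    set K : ℚ⟦X⟧ := X + X * L0 with hKdef
    have hL0D : L0 * D = X * (Lq - X) := by
      rw [hL0def]
      linear_combination (X * (Lq - X)) * hu
    have hQ := Lq_quad
    refine ⟨⟨K, Lq, L0⟩, ⟨rfl, ?_, ?_⟩, ?_⟩
    · -- eq2
      have key : D * Lq = D * (1 + 2 * X * Lq ^ 2 + X * (Lq - 1) + 2 * X * (L0 - K)) := by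
        rw [hKdef]
        linear_combination (-(2:ℚ⟦X⟧)*X*(1-X)) * hL0D - (D + X*(1-X)) * hQ
      exact mul_left_cancel₀ (D_ne Lq) key
    · -- eq3
      rw [hKdef]
      linear_combination hL0D
    · -- uniqueness
      rintro ⟨K', L', L0'⟩ hsys
      obtain ⟨h1', h2', h3'⟩ := hsys
      dsimp only at h1' h2' h3'
      have hQ' := quad_of_sys K' L' L0' ⟨h1', h2', h3'⟩
      have hLL : L' = Lq := by
        have hfac : (L' - Lq) * (2*X*(L' + Lq) - (1-X)^2) = 0 := by
          linear_combination hQ' - hQ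
        rcases mul_eq_zero.mp hfac with h | h
        · exact sub_eq_zero.mp h
        · exfalso
          have := congrArg (constantCoeff) h
          simp at this
      have hL0' : L0' * D = X * (Lq - X) := by
        have := L0D_of_sys K' L' L0' ⟨h1', h2', h3'⟩
        rw [hLL] at this
        exact this
      have hL0eq : L0' = L0 := by
        have h' : L0' * D = L0 * D := hL0'.trans hL0D.symm
        have hD := D_ne Lq
        rw [← hDdef] at hD
        exact mul_right_cancel₀ hD h'
      have hKeq : K' = K := by rw [h1', hL0eq, hKdef]
      simp [Prod.ext_iff, hKeq, hLL, hL0eq]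
  · exact quad_of_sys
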